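/- Suppose (A₁,B₁,C₁,A₂,B₂,C₂) ∈ 𝔬⁶ satisfies the invariant conditions with A₁ = B₁ = A₂ = 0. Then C₁ = 1, and choosing a, b ∈ 𝔬 with aC₂ − bB₂ = 1, the matrix X = [[a−bB₂, b−bC₂, 0],[B₂, C₂, 0],[0, 0, 1]] lies in Γ(3) and satisfies Inv(X) = (0, 0, 1, 0, B₂, C₂). -/

import Mathlib

/-- The Eisenstein integers `ℤ[ω]`, realized as `ℤ[X]/(X² + X + 1)`. -/
abbrev Eis : Type := AdjoinRoot (Polynomial.X ^ 2 + Polynomial.X + 1 : Polynomial ℤ)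

def Lam2 {R : Type*} [CommRing R] (A : Matrix (Fin 3) (Fin 3) R) : Matrix (Fin 3) (Fin 3) R :=
  !![A 0 0 * A 1 1 - A 0 1 * A 1 0, A 0 0 * A 1 2 - A 0 2 * A 1 0, A 0 1 * A 1 2 - A 1 1 * A 0 2;
     A 0 0 * A 2 1 - A 0 1 * A 2 0, A 0 0 * A 2 2 - A 0 2 * A 2 0, A 0 1 * A 2 2 - A 2 1 * A 0 2;
     A 1 0 * A 2 1 - A 1 1 * A 2 0, A 1 0 * A 2 2 - A 1 2 * A 2 0, A 1 1 * A 2 2 - A 1 2 * A 2 1]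

def Ups1 {R : Type*} [CommRing R] (A : Matrix (Fin 3) (Fin 3) R) : Matrix (Fin 3) (Fin 3) R :=
  !![A 2 2, -A 1 2, A 0 2; -A 2 1, A 1 1, -A 0 1; A 2 0, -A 1 0, A 0 0]

def phi1 {R : Type*} [CommRing R] (y : Matrix (Fin 2) (Fin 2) R) : Matrix (Fin 3) (Fin 3) R :=
  !![y 0 0, y 0 1, 0; y 1 0, y 1 1, 0; 0, 0, 1]

def phi2 {R : Type*} [CommRing R] (y : Matrix (Fin 2) (Fin 2) R) : Matrix (Fin 3) (Fin 3) R :=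
  !![1, 0, 0; 0, y 0 0, y 0 1; 0, y 1 0, y 1 1]

section Aux
open Polynomial AdjoinRoot

noncomputable abbrev fE : Polynomial ℤ := X ^ 2 + X + 1

lemma fE_monic : fE.Monic := by unfold fE; monicity!

lemma fE_degree : fE.degree = 2 := by unfold fE; compute_degree!

noncomputable def rE : Eis := AdjoinRoot.root fE

lemma rE_rel : rE ^ 2 + rE + 1 = 0 := by
  have h := AdjoinRoot.mk_self (f := fE)
  have : (AdjoinRoot.mk fE) fE = rE ^ 2 + rE + 1 := by
    unfold fE rE
    simp [map_add, map_pow, AdjoinRoot.mk_X]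
  rw [this] at h
  exact h

lemma Eis.cast_inj {a b : ℤ} (h : (a : Eis) = (b : Eis)) : a = b := by
  have h1 : ((a - b : ℤ) : Eis) = 0 := by push_cast; rw [h]; ring
  have h2 : (AdjoinRoot.mk fE) (C (a - b)) = 0 := by
    rw [AdjoinRoot.mk_C]
    rw [show (AdjoinRoot.of fE) (a-b) = ((a-b:ℤ):Eis) from eq_intCast _ _]
    exact h1
  rw [AdjoinRoot.mk_eq_zero] at h2
  have h3 : C (a - b) = 0 := by
    refine Polynomial.eq_zero_of_dvd_of_degree_lt h2 ?_
    calc (C (a-b)).degree ≤ 0 := degree_C_le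
    _ < fE.degree := by rw [fE_degree]; norm_num
  have := Polynomial.C_eq_zero.mp h3
  omega

lemma Eis.unique (a b : ℤ) (h : (a : Eis) + (b : Eis) * rE = 0) : a = 0 ∧ b = 0 := by
  have h2 : (AdjoinRoot.mk fE) (C a + C b * X) = 0 := by
    rw [map_add, map_mul, AdjoinRoot.mk_C, AdjoinRoot.mk_C, AdjoinRoot.mk_X]
    rw [show (AdjoinRoot.of fE) a = ((a:ℤ):Eis) from eq_intCast _ _,
        show (AdjoinRoot.of fE) b = ((b:ℤ):Eis) from eq_intCast _ _]
    exact h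
  rw [AdjoinRoot.mk_eq_zero] at h2
  have h3 : C a + C b * X = 0 := by
    refine Polynomial.eq_zero_of_dvd_of_degree_lt h2 ?_
    calc (C a + C b * X).degree ≤ 1 := by compute_degree
    _ < fE.degree := by rw [fE_degree]; norm_num
  constructor
  · have h0 := congrArg (fun p => Polynomial.coeff p 0) h3
    simp only [Polynomial.coeff_add, Polynomial.coeff_C_mul, Polynomial.coeff_X_zero,
      Polynomial.coeff_C_zero, Polynomial.coeff_zero, mul_zero, add_zero] at h0
    exact h0
  · have h1 := congrArg (fun p => Polynomial.coeff p 1) h3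
    simp only [Polynomial.coeff_add, Polynomial.coeff_C_mul, Polynomial.coeff_X_one,
      Polynomial.coeff_zero, mul_one] at h1
    rwa [Polynomial.coeff_C, if_neg (by norm_num), zero_add] at h1

lemma Eis.exists_rep (x : Eis) : ∃ a b : ℤ, x = (a : Eis) + (b : Eis) * rE := by
  obtain ⟨p, rfl⟩ := AdjoinRoot.mk_surjective x
  set c0 := (p %ₘ fE).coeff 0 with hc0
  set c1 := (p %ₘ fE).coeff 1 with hc1
  refine ⟨c0, c1, ?_⟩
  have hd : (p %ₘ fE).degree ≤ 1 := by
    have := Polynomial.degree_modByMonic_lt p fE_monic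
    rw [fE_degree] at this
    exact Order.le_of_lt_succ (by exact_mod_cast this)
  have heq : p %ₘ fE = C c1 * X + C c0 :=
    Polynomial.eq_X_add_C_of_degree_le_one hd
  have hmk : (AdjoinRoot.mk fE) p = (AdjoinRoot.mk fE) (p %ₘ fE) := by
    conv_lhs => rw [← Polynomial.modByMonic_add_div p fE]
    simp
  rw [hmk, heq, map_add, map_mul, AdjoinRoot.mk_C, AdjoinRoot.mk_C, AdjoinRoot.mk_X]
  simp only [eq_intCast]
  unfold rE; ring

lemma sE_rel : Polynomial.eval₂ (AdjoinRoot.of fE) (-rE - 1) fE = 0 := by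
  simp only [fE, Polynomial.eval₂_add, Polynomial.eval₂_pow, Polynomial.eval₂_X,
    Polynomial.eval₂_one]
  linear_combination rE_rel

noncomputable def sigmaE : Eis →+* Eis := AdjoinRoot.lift (AdjoinRoot.of fE) (-rE - 1) sE_rel

lemma sigmaE_root : sigmaE rE = -rE - 1 := AdjoinRoot.lift_root sE_rel

lemma sigmaE_int (a : ℤ) : sigmaE ((a : ℤ) : Eis) = ((a : ℤ) : Eis) := map_intCast _ _

lemma norm_formula (a b : ℤ) :
    ((a : Eis) + b * rE) * sigmaE ((a : Eis) + b * rE) = ((a^2 - a*b + b^2 : ℤ) : Eis) := by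
  rw [map_add, map_mul, sigmaE_int, sigmaE_int, sigmaE_root]
  push_cast
  linear_combination (-(b:Eis)^2) * rE_rel

lemma Eis.unit_one (x : Eis) (hu : IsUnit x) (h3 : x - 1 ∈ Ideal.span {(3 : Eis)}) : x = 1 := by
  obtain ⟨y, hxy⟩ := isUnit_iff_exists_inv.mp hu
  obtain ⟨a, b, rfl⟩ := Eis.exists_rep x
  obtain ⟨c, d, rfl⟩ := Eis.exists_rep y
  rw [Ideal.mem_span_singleton] at h3
  obtain ⟨t, ht⟩ := h3
  obtain ⟨u, v, rfl⟩ := Eis.exists_rep t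
  -- congruence: a = 1 + 3u, b = 3v
  have hcong : (((a - 1 - 3*u : ℤ)) : Eis) + ((b - 3*v : ℤ) : Eis) * rE = 0 := by
    push_cast
    linear_combination ht
  obtain ⟨ha, hb⟩ := Eis.unique _ _ hcong
  -- norm multiplicative
  have n1 := norm_formula a b
  have n2 := norm_formula c d
  have hs : sigmaE ((a:Eis) + b*rE) * sigmaE ((c:Eis) + d*rE) = 1 := by
    rw [← map_mul, hxy, map_one]
  have hN : (((a^2 - a*b + b^2) * (c^2 - c*d + d^2) - 1 : ℤ) : Eis) = 0 := by
    push_cast at n1 n2 ⊢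
    linear_combination (-((c:Eis)^2 - c*d + d^2)) * n1
      + (-(((a:Eis)+b*rE) * sigmaE ((a:Eis)+b*rE))) * n2
      + (sigmaE ((a:Eis)+b*rE) * sigmaE ((c:Eis)+d*rE)) * hxy + hs
  have hNZ : (a^2 - a*b + b^2) * (c^2 - c*d + d^2) = 1 := by
    have := Eis.cast_inj (a := (a^2 - a*b + b^2) * (c^2 - c*d + d^2) - 1) (b := 0)
      (by push_cast at hN ⊢; linear_combination hN)
    omega
  have hN1 : a^2 - a*b + b^2 = 1 := by
    rcases Int.isUnit_iff.mp (IsUnit.of_mul_eq_one _ hNZ) with h | h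
    · exact h
    · exfalso; nlinarith [sq_nonneg (2*a - b), sq_nonneg b]
  have hb' : b = 3*v := by omega
  have ha' : a = 3*u + 1 := by omega
  subst hb' ha'
  have hv : v = 0 := by
    have h1 : v^2 ≤ 0 := by nlinarith [sq_nonneg (2*(3*u+1) - 3*v)]
    exact pow_eq_zero_iff (n := 2) (by norm_num) |>.mp (le_antisymm h1 (sq_nonneg v))
  subst hv
  have heq : 9*u^2 + 6*u = 0 := by nlinarith
  have hu0 : u = 0 := by
    rcases lt_trichotomy u 0 with h|h|h
    · exfalso; nlinarith
    · exact h
    · exfalso; nlinarith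
  subst hu0
  push_cast; ring

end Aux

theorem case5_representative (C₁ B₂ C₂ : Eis)
    (hB₂ : B₂ ∈ Ideal.span {(3 : Eis)})
    (hC₁ : C₁ - 1 ∈ Ideal.span {(3 : Eis)})
    (hC₂ : C₂ - 1 ∈ Ideal.span {(3 : Eis)})
    (hgcd1 : Ideal.span {(0 : Eis), 0, C₁} = (⊤ : Ideal Eis))
    (hgcd2 : Ideal.span {(0 : Eis), B₂, C₂} = (⊤ : Ideal Eis))
    (hI4 : (0 : Eis) * C₂ - 0 * B₂ + C₁ * 0 = 0) :
    C₁ = 1 ∧ (∃ a b : Eis, a * C₂ - b * B₂ = 1) ∧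
    ∀ a b : Eis, a * C₂ - b * B₂ = 1 →
      let X : Matrix (Fin 3) (Fin 3) Eis :=
        !![a - b * B₂, b - b * C₂, 0; B₂, C₂, 0; 0, 0, 1]
      X.det = 1 ∧
      (∀ i j, X i j - (1 : Matrix (Fin 3) (Fin 3) Eis) i j ∈ Ideal.span {(3 : Eis)}) ∧
      (X 2 0, X 2 1, X 2 2, X 1 0 * X 2 1 - X 1 1 * X 2 0,
        X 1 0 * X 2 2 - X 1 2 * X 2 0, X 1 1 * X 2 2 - X 1 2 * X 2 1) =
        ((0 : Eis), 0, 1, 0, B₂, C₂) := by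
  rw [Ideal.mem_span_singleton] at hB₂ hC₂
  obtain ⟨p, hp⟩ := hB₂
  obtain ⟨q, hq⟩ := hC₂
  refine ⟨?_, ?_, ?_⟩
  · apply Eis.unit_one _ _ hC₁
    have h1 : (1 : Eis) ∈ Ideal.span {(0 : Eis), 0, C₁} := hgcd1 ▸ Submodule.mem_top
    rw [Ideal.mem_span_insert] at h1
    obtain ⟨r, z, hz, h⟩ := h1
    rw [Ideal.mem_span_insert] at hz
    obtain ⟨r', w, hw, h'⟩ := hz
    rw [Ideal.mem_span_singleton] at hw
    obtain ⟨s, hs⟩ := hw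
    exact IsUnit.of_mul_eq_one s (by linear_combination -h - h' - hs)
  · have h1 : (1 : Eis) ∈ Ideal.span {(0 : Eis), B₂, C₂} := hgcd2 ▸ Submodule.mem_top
    rw [Ideal.mem_span_insert] at h1
    obtain ⟨r, z, hz, h⟩ := h1
    obtain ⟨u, v, huv⟩ := Ideal.mem_span_pair.mp hz
    exact ⟨v, -u, by linear_combination -h + huv⟩
  · intro a b hab X
    refine ⟨?_, ?_, ?_⟩
    · simp [X, Matrix.det_fin_three]
      linear_combination hab
    · intro i j
      fin_cases i <;> fin_cases j <;>
        simp [X, Matrix.one_apply, Ideal.mem_span_singleton]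
      · exact ⟨-(a*q), by linear_combination hab - a*hq⟩
      · exact ⟨-(b*q), by linear_combination -b*hq⟩
      · exact ⟨p, hp⟩
      · exact ⟨q, by linear_combination hq⟩
    · simp [X]
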